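/- Let E be a Riesz space and let p, q : ℕ → ℕ satisfy the deferred property. If x_n →^{D_{st_o}}_{p,q} x and y_n →^{D_{st_o}}_{p,q} y in E, then (x_n ∧ y_n) →^{D_{st_o}}_{p,q} (x ∧ y). -/

import Mathlib

open Filter Topology

variable {E : Type*} [AddCommGroup E] [Lattice E]
  [CovariantClass E E (· + ·) (· ≤ ·)] [Module ℝ E] [PosSMulMono ℝ E]

/-- `p` and `q` satisfy the deferred property: `p n < q n` for all `n` and `q n → ∞`. -/
def DeferredProperty (p q : ℕ → ℕ) : Prop :=
  (∀ n, p n < q n) ∧ Tendsto q atTop atTop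

open Classical in
/-- The ratio `|{k ∈ K : p n < k ≤ q n}| / (q n - p n)`. -/
noncomputable def deferredRatio (p q : ℕ → ℕ) (K : Set ℕ) (n : ℕ) : ℝ :=
  (((Finset.Ioc (p n) (q n)).filter (fun k => k ∈ K)).card : ℝ) / ((q n : ℝ) - (p n : ℝ))

/-- The deferred density of `K ⊆ ℕ` is `a`. -/
def DeferredDensity (p q : ℕ → ℕ) (K : Set ℕ) (a : ℝ) : Prop :=
  Tendsto (deferredRatio p q K) atTop (nhds a)

/-- `z` is deferred statistical order decreasing to `0`: there is an (infinite) set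
`K = {k₁ < k₂ < ⋯}` of deferred density one along which `z` is decreasing with infimum `0`. -/
def DStatDecreasing (p q : ℕ → ℕ) (z : ℕ → E) : Prop :=
  ∃ K : Set ℕ, K.Infinite ∧ DeferredDensity p q K 1 ∧
    (∀ i ∈ K, ∀ j ∈ K, i ≤ j → z j ≤ z i) ∧ IsGLB (z '' K) 0

/-- `x` is deferred statistical order convergent to `l`. -/
def DStatOrderConv (p q : ℕ → ℕ) (x : ℕ → E) (l : E) : Prop :=
  ∃ z : ℕ → E, DStatDecreasing p q z ∧
    ∃ K : Set ℕ, K.Infinite ∧ DeferredDensity p q K 1 ∧ ∀ k ∈ K, |x k - l| ≤ z k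

open Classical in
lemma aux_d_pos {p q : ℕ → ℕ} (hp : ∀ n, p n < q n) (n : ℕ) :
    (0:ℝ) < (q n : ℝ) - (p n : ℝ) := by
  have := hp n
  have : (p n : ℝ) < (q n : ℝ) := by exact_mod_cast this
  linarith

open Classical in
lemma aux_ratio_mono {p q : ℕ → ℕ} (hp : ∀ n, p n < q n) {K1 K2 : Set ℕ} (h : K1 ⊆ K2) (n : ℕ) :
    deferredRatio p q K1 n ≤ deferredRatio p q K2 n := by
  have hsub : (Finset.Ioc (p n) (q n)).filter (fun k => k ∈ K1)
      ⊆ (Finset.Ioc (p n) (q n)).filter (fun k => k ∈ K2) :=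
    Finset.monotone_filter_right _ (fun x _ hx => h hx)
  unfold deferredRatio
  exact (div_le_div_iff_of_pos_right (aux_d_pos hp n)).mpr
    (by exact_mod_cast Finset.card_le_card hsub)

open Classical in
lemma aux_ratio_inter {p q : ℕ → ℕ} (hp : ∀ n, p n < q n) (K1 K2 : Set ℕ) (n : ℕ) :
    deferredRatio p q K1 n + deferredRatio p q K2 n - 1 ≤ deferredRatio p q (K1 ∩ K2) n := by
  classical
  set s := Finset.Ioc (p n) (q n) with hs
  have hd : (0:ℝ) < (q n : ℝ) - (p n : ℝ) := aux_d_pos hp n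
  have hcards : (s.card : ℝ) = (q n : ℝ) - (p n : ℝ) := by
    rw [hs, Nat.card_Ioc]
    push_cast [Nat.cast_sub (hp n).le]
    ring
  have hfilt : s.filter (fun k => k ∈ K1 ∩ K2)
      = s.filter (fun k => k ∈ K1) ∩ s.filter (fun k => k ∈ K2) := by
    ext k
    simp [Set.mem_inter_iff, Finset.mem_filter, and_assoc]
    tauto
  have hcard : (s.filter (fun k => k ∈ K1)).card + (s.filter (fun k => k ∈ K2)).card
      ≤ (s.filter (fun k => k ∈ K1 ∩ K2)).card + s.card := by
    rw [hfilt]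
    have h1 := Finset.card_inter_add_card_union (s.filter (fun k => k ∈ K1))
      (s.filter (fun k => k ∈ K2))
    have h2 : (s.filter (fun k => k ∈ K1) ∪ s.filter (fun k => k ∈ K2)).card ≤ s.card :=
      Finset.card_le_card (by
        intro k hk
        rcases Finset.mem_union.mp hk with h | h
        · exact Finset.mem_of_mem_filter k h
        · exact Finset.mem_of_mem_filter k h)
    omega
  have hcard' : ((s.filter (fun k => k ∈ K1)).card : ℝ) + ((s.filter (fun k => k ∈ K2)).card : ℝ)
      - ((q n : ℝ) - (p n : ℝ)) ≤ ((s.filter (fun k => k ∈ K1 ∩ K2)).card : ℝ) := by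
    have hR : ((s.filter (fun k => k ∈ K1)).card : ℝ) + ((s.filter (fun k => k ∈ K2)).card : ℝ)
        ≤ ((s.filter (fun k => k ∈ K1 ∩ K2)).card : ℝ) + (s.card : ℝ) := by
      exact_mod_cast hcard
    linarith [hR, hcards]
  unfold deferredRatio
  rw [← add_div, ← hs]
  have hstep := (div_le_div_iff_of_pos_right hd).mpr hcard'
  have heq : (((s.filter (fun k => k ∈ K1)).card : ℝ) + ((s.filter (fun k => k ∈ K2)).card : ℝ)
      - ((q n : ℝ) - (p n : ℝ))) / ((q n : ℝ) - (p n : ℝ))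
      = (((s.filter (fun k => k ∈ K1)).card : ℝ) + ((s.filter (fun k => k ∈ K2)).card : ℝ))
        / ((q n : ℝ) - (p n : ℝ)) - 1 := by
    field_simp
  rw [heq] at hstep
  convert hstep using 5; rfl

open Classical in
lemma aux_density_inter {p q : ℕ → ℕ} (hp : ∀ n, p n < q n) {K1 K2 : Set ℕ}
    (h1 : DeferredDensity p q K1 1) (h2 : DeferredDensity p q K2 1) :
    DeferredDensity p q (K1 ∩ K2) 1 := by
  have hlow : Tendsto (fun n => deferredRatio p q K1 n + deferredRatio p q K2 n - 1)
      atTop (nhds 1) := by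
    have := (h1.add h2).sub_const 1
    simpa using this
  refine tendsto_of_tendsto_of_tendsto_of_le_of_le hlow h1 ?_ ?_
  · exact fun n => aux_ratio_inter hp K1 K2 n
  · exact fun n => aux_ratio_mono hp Set.inter_subset_left n

open Classical in
lemma aux_infinite {p q : ℕ → ℕ} (hpq : DeferredProperty p q) {K : Set ℕ}
    (hK : DeferredDensity p q K 1) : K.Infinite := by
  by_contra hfin'
  rw [Set.not_infinite] at hfin'
  have hfin := hfin'
  obtain ⟨M, hM⟩ : ∃ M, ∀ k ∈ K, k ≤ M := by
    rcases hfin.bddAbove with ⟨M, hM⟩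
    exact ⟨M, fun k hk => hM hk⟩
  have hev1 : ∀ᶠ n in atTop, (1:ℝ)/2 < deferredRatio p q K n :=
    hK.eventually (eventually_gt_nhds (by norm_num))
  have hev2 : ∀ᶠ n in atTop, 2 * M + 1 ≤ q n := hpq.2.eventually_ge_atTop (2 * M + 1)
  rcases (hev1.and hev2).exists with ⟨n, hn1, hn2⟩
  have hd : (0:ℝ) < (q n : ℝ) - (p n : ℝ) := aux_d_pos hpq.1 n
  set s := Finset.Ioc (p n) (q n) with hs
  have hsub : s.filter (fun k => k ∈ K) ⊆ Finset.Ioc (p n) M := by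
    intro k hk
    rw [Finset.mem_filter] at hk
    rcases hk with ⟨hks, hkK⟩
    rw [hs, Finset.mem_Ioc] at hks
    exact Finset.mem_Ioc.mpr ⟨hks.1, hM k hkK⟩
  have hcard : (s.filter (fun k => k ∈ K)).card ≤ M - p n := by
    calc (s.filter (fun k => k ∈ K)).card ≤ (Finset.Ioc (p n) M).card := Finset.card_le_card hsub
    _ = M - p n := Nat.card_Ioc _ _
  have hkey : 2 * (s.filter (fun k => k ∈ K)).card ≤ q n - p n := by
    have := hpq.1 n; omega
  have : deferredRatio p q K n ≤ 1/2 := by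
    unfold deferredRatio
    rw [div_le_div_iff₀ hd (by norm_num)]
    have h2 : (2:ℝ) * ((s.filter (fun k => k ∈ K)).card : ℝ) ≤ (q n : ℝ) - (p n : ℝ) := by
      have hcast : ((2 * (s.filter (fun k => k ∈ K)).card : ℕ) : ℝ) ≤ ((q n - p n : ℕ) : ℝ) := by
        exact_mod_cast hkey
      push_cast [Nat.cast_sub (hpq.1 n).le] at hcast
      linarith
    rw [← hs]
    linarith
  linarith

lemma aux_isGLB_subset {z : ℕ → E} {K1 K : Set ℕ} (hsub : K ⊆ K1) (hinf : K.Infinite)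
    (hdec : ∀ i ∈ K1, ∀ j ∈ K1, i ≤ j → z j ≤ z i) (hglb : IsGLB (z '' K1) 0) :
    IsGLB (z '' K) 0 := by
  constructor
  · rintro _ ⟨k, hk, rfl⟩
    exact hglb.1 ⟨k, hsub hk, rfl⟩
  · intro c hc
    apply hglb.2
    rintro _ ⟨j, hj, rfl⟩
    obtain ⟨m, hm, hjm⟩ := hinf.exists_gt j
    exact le_trans (hc ⟨m, hm, rfl⟩) (hdec j hj m (hsub hm) hjm.le)

lemma aux_glb_sum {zx zy : ℕ → E} {K1 K2 K : Set ℕ} (h1 : K ⊆ K1) (h2 : K ⊆ K2)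
    (hinf : K.Infinite)
    (hdx : ∀ i ∈ K1, ∀ j ∈ K1, i ≤ j → zx j ≤ zx i) (hgx : IsGLB (zx '' K1) 0)
    (hdy : ∀ i ∈ K2, ∀ j ∈ K2, i ≤ j → zy j ≤ zy i) (hgy : IsGLB (zy '' K2) 0) :
    IsGLB ((fun k => zx k + zy k) '' K) 0 := by
  have hx0 : ∀ k ∈ K1, 0 ≤ zx k := fun k hk => hgx.1 ⟨k, hk, rfl⟩
  have hy0 : ∀ k ∈ K2, 0 ≤ zy k := fun k hk => hgy.1 ⟨k, hk, rfl⟩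
  have hgxK : IsGLB (zx '' K) 0 := aux_isGLB_subset h1 hinf hdx hgx
  have hgyK : IsGLB (zy '' K) 0 := aux_isGLB_subset h2 hinf hdy hgy
  constructor
  · rintro _ ⟨k, hk, rfl⟩
    exact add_nonneg (hx0 k (h1 hk)) (hy0 k (h2 hk))
  · intro c hc
    have hkey : ∀ k ∈ K, c ≤ zy k := by
      intro k hk
      have hlb : c - zy k ∈ lowerBounds (zx '' K) := by
        rintro _ ⟨j, hj, rfl⟩
        rcases le_or_gt k j with h | h
        · have hc1 : c ≤ zx j + zy j := hc ⟨j, hj, rfl⟩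
          have hc2 : zy j ≤ zy k := hdy k (h2 hk) j (h2 hj) h
          have : c ≤ zx j + zy k := le_trans hc1 (add_le_add_right hc2 _)
          exact sub_le_iff_le_add.mpr this
        · have hc1 : c ≤ zx k + zy k := hc ⟨k, hk, rfl⟩
          have hc2 : zx k ≤ zx j := hdx j (h1 hj) k (h1 hk) h.le
          have : c ≤ zx j + zy k := le_trans hc1 (add_le_add_left hc2 _)
          exact sub_le_iff_le_add.mpr this
      exact sub_nonpos.mp (hgxK.2 hlb)
    have : c ∈ lowerBounds (zy '' K) := by
      rintro _ ⟨k, hk, rfl⟩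
      exact hkey k hk
    exact hgyK.2 this

theorem stmt8 (p q : ℕ → ℕ) (hpq : DeferredProperty p q) (x y : ℕ → E) (a b : E)
    (hx : DStatOrderConv p q x a) (hy : DStatOrderConv p q y b) :
    DStatOrderConv p q (fun n => x n ⊓ y n) (a ⊓ b) := by
  obtain ⟨zx, ⟨Kx1, _, hKx1d, hdx, hgx⟩, Kx2, _, hKx2d, hbx⟩ := hx
  obtain ⟨zy, ⟨Ky1, _, hKy1d, hdy, hgy⟩, Ky2, _, hKy2d, hby⟩ := hy
  set K := (Kx1 ∩ Ky1) ∩ (Kx2 ∩ Ky2) with hK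
  have hKd : DeferredDensity p q K 1 :=
    aux_density_inter hpq.1 (aux_density_inter hpq.1 hKx1d hKy1d)
      (aux_density_inter hpq.1 hKx2d hKy2d)
  have hKinf : K.Infinite := aux_infinite hpq hKd
  have hKx1 : K ⊆ Kx1 := fun k hk => hk.1.1
  have hKy1 : K ⊆ Ky1 := fun k hk => hk.1.2
  have hKx2 : K ⊆ Kx2 := fun k hk => hk.2.1
  have hKy2 : K ⊆ Ky2 := fun k hk => hk.2.2
  refine ⟨fun k => zx k + zy k, ⟨K, hKinf, hKd, ?_, ?_⟩, K, hKinf, hKd, ?_⟩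
  · intro i hi j hj hij
    exact add_le_add (hdx i (hKx1 hi) j (hKx1 hj) hij) (hdy i (hKy1 hi) j (hKy1 hj) hij)
  · exact aux_glb_sum hKx1 hKy1 hKinf hdx hgx hdy hgy
  · intro k hk
    have h1 : |x k ⊓ y k - a ⊓ y k| ≤ |x k - a| := abs_inf_sub_inf_le_abs _ _ _
    have h2 : |a ⊓ y k - a ⊓ b| ≤ |y k - b| := by
      rw [inf_comm a (y k), inf_comm a b]
      exact abs_inf_sub_inf_le_abs _ _ _
    have h3 : x k ⊓ y k - a ⊓ b = (x k ⊓ y k - a ⊓ y k) + (a ⊓ y k - a ⊓ b) := by abel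
    calc |x k ⊓ y k - a ⊓ b| ≤ |x k ⊓ y k - a ⊓ y k| + |a ⊓ y k - a ⊓ b| := by
          rw [h3]; exact abs_add_le _ _
    _ ≤ |x k - a| + |y k - b| := add_le_add h1 h2
    _ ≤ zx k + zy k := add_le_add (hbx k (hKx2 hk)) (hby k (hKy2 hk))
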